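/- Every residue class r modulo 370944 has a representative in [0, 370944) expressible as a sum of exactly 198 values τ(aᵢ) with 1 ≤ aᵢ ≤ 105: there exist positive integers a₁,...,a₁₉₈ ≤ 105 with ∑_{i=1}^{198} τ(aᵢ) ≡ r (mod 370944). -/

import Mathlib

set_option maxRecDepth 10000

/-- The Ramanujan tau function: the coefficient of `X^n` in
`X * ∏_{k=1}^{n} (1 - X^k)^24` (factors with `k > n` do not affect this coefficient). -/
noncomputable def ramanujanTau (n : ℕ) : ℤ :=
  (Polynomial.X * ∏ k ∈ Finset.Icc 1 n, ((1 : Polynomial ℤ) - Polynomial.X ^ k) ^ 24).coeff n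

open Polynomial

/-! ### Computable truncated polynomial arithmetic (degree ≤ 105) via lists -/

def ams (c : ℤ) (s : ℕ) (b acc : List ℤ) : List ℤ :=
  if s ≤ 105 then List.zipWith (fun u v => u + c * v) acc (List.replicate s 0 ++ b) else acc

def amsMany : List (ℤ × ℕ) → List ℤ → List ℤ
  | [], a => a
  | cs :: t, a => ams cs.1 cs.2 a (amsMany t a)

def binL (k : ℕ) : List (ℤ × ℕ) :=
  [(-24, k*1), (276, k*2), (-2024, k*3), (10626, k*4), (-42504, k*5), (134596, k*6),
   (-346104, k*7), (735471, k*8), (-1307504, k*9), (1961256, k*10), (-2496144, k*11),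
   (2704156, k*12), (-2496144, k*13), (1961256, k*14), (-1307504, k*15), (735471, k*16),
   (-346104, k*17), (134596, k*18), (-42504, k*19), (10626, k*20), (-2024, k*21),
   (276, k*22), (-24, k*23), (1, k*24)]

def prodT : ℕ → List ℤ
  | 0 => 1 :: List.replicate 105 0
  | n+1 => amsMany (binL (n+1)) (prodT n)

lemma prodT_succ (n : ℕ) : prodT (n+1) = amsMany (binL (n+1)) (prodT n) := rfl

/-- `l` lists the coefficients of `p` up to degree 105. -/
def Agree (p : Polynomial ℤ) (l : List ℤ) : Prop :=
  l.length = 106 ∧ ∀ i, i ≤ 105 → p.coeff i = l.getD i 0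

/-- The polynomial represented by a coefficient/shift list. -/
noncomputable def SP (L : List (ℤ × ℕ)) : Polynomial ℤ :=
  (L.map fun cs => C cs.1 * X ^ cs.2).sum

lemma getD_replicate_zero (n i : ℕ) : (List.replicate n (0:ℤ)).getD i 0 = 0 := by
  induction n generalizing i with
  | zero => simp
  | succ m ih =>
    cases i with
    | zero => simp [List.replicate_succ]
    | succ j => simpa [List.replicate_succ] using ih j

lemma agree_amsMany {p : Polynomial ℤ} {a : List ℤ} (h : Agree p a) (L : List (ℤ × ℕ)) :
    Agree (p + p * SP L) (amsMany L a) := by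
  induction L with
  | nil => simpa [SP, amsMany] using h
  | cons cs t ih =>
    obtain ⟨c, s⟩ := cs
    have hlen : (amsMany t a).length = 106 := ih.1
    have hco := ih.2
    have key : p + p * SP ((c, s) :: t) = (p + p * SP t) + C c * p * X ^ s := by
      simp only [SP, List.map_cons, List.sum_cons]
      ring
    show Agree _ (ams c s a (amsMany t a))
    constructor
    · rw [ams]
      split
      · rw [List.length_zipWith, List.length_append, List.length_replicate, hlen, h.1]
        omega
      · exact hlen
    · intro i hi
      rw [key, Polynomial.coeff_add]
      have hc2 : (C c * p * X ^ s).coeff i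
          = c * (if s ≤ i then p.coeff (i - s) else 0) := by
        rw [Polynomial.coeff_mul_X_pow', Polynomial.coeff_C_mul]
        split <;> simp
      rw [hc2, ams]
      by_cases hs : s ≤ 105
      · rw [if_pos hs]
        have hi1 : i < (amsMany t a).length := by omega
        have hi2 : i < (List.replicate s (0:ℤ) ++ a).length := by
          rw [List.length_append, List.length_replicate, h.1]; omega
        have hi3 : i < (List.zipWith (fun u v => u + c * v) (amsMany t a)
            (List.replicate s (0:ℤ) ++ a)).length := by
          rw [List.length_zipWith]; omega
        rw [List.getD_eq_getElem _ _ hi3, List.getElem_zipWith,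
          ← List.getD_eq_getElem _ _ hi1, ← List.getD_eq_getElem _ _ hi2, ← hco i hi]
        congr 1
        by_cases hsi : s ≤ i
        · rw [if_pos hsi, List.getD_append_right _ _ _ _ (by rw [List.length_replicate]; omega),
            List.length_replicate, ← h.2 (i - s) (by omega)]
        · rw [if_neg hsi,
            List.getD_append _ _ _ _ (by rw [List.length_replicate]; omega),
            getD_replicate_zero]
      · rw [if_neg hs, if_neg (by omega : ¬ s ≤ i), mul_zero, add_zero]
        exact hco i hi

lemma agree_mul_factor {p : Polynomial ℤ} {a : List ℤ} (h : Agree p a) (k : ℕ) :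
    Agree (p * (1 - X ^ k) ^ 24) (amsMany (binL k) a) := by
  have h2 := agree_amsMany h (binL k)
  have e : p + p * SP (binL k) = p * (1 - X ^ k) ^ 24 := by
    simp only [SP, binL, List.map_cons, List.map_nil, List.sum_cons, List.sum_nil]
    simp only [map_neg, map_ofNat, map_one]
    ring
  rwa [e] at h2

lemma agree_prodT (n : ℕ) :
    Agree (∏ k ∈ Finset.Icc 1 n, ((1 : Polynomial ℤ) - X ^ k) ^ 24) (prodT n) := by
  induction n with
  | zero =>
    constructor
    · simp [prodT]
    · intro i hi
      show (∏ k ∈ Finset.Icc 1 0, ((1 : Polynomial ℤ) - X ^ k) ^ 24).coeff i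
        = (1 :: List.replicate 105 (0:ℤ)).getD i 0
      rw [show Finset.Icc 1 0 = ∅ by rfl, Finset.prod_empty]
      cases i with
      | zero => simp
      | succ j =>
        rw [Polynomial.coeff_one]
        simp only [List.getD_cons_succ, getD_replicate_zero]
        simp
  | succ n ih =>
    rw [Finset.prod_Icc_succ_top (by omega : 1 ≤ n + 1), prodT_succ]
    exact agree_mul_factor ih (n + 1)

/-! ### Only factors with small `k` matter for small coefficients -/

lemma dvd_prod_sub_one {R : Type*} [CommRing R] {ι : Type*} (s : Finset ι) (f : ι → R)
    (d : R) (h : ∀ i ∈ s, d ∣ f i - 1) : d ∣ (∏ i ∈ s, f i) - 1 := by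
  classical
  induction s using Finset.induction_on with
  | empty => simp
  | @insert x s' hx ih =>
    rw [Finset.prod_insert hx]
    have e : f x * ∏ i ∈ s', f i - 1 = f x * ((∏ i ∈ s', f i) - 1) + (f x - 1) := by ring
    rw [e]
    exact dvd_add (Dvd.dvd.mul_left (ih fun i hi => h i (Finset.mem_insert_of_mem hi)) _)
      (h x (Finset.mem_insert_self x s'))

lemma tau_eq_getD {n : ℕ} (h1 : 1 ≤ n) (h2 : n ≤ 105) :
    ramanujanTau n = (prodT 105).getD (n - 1) 0 := by
  obtain ⟨m, rfl⟩ : ∃ m, n = m + 1 := ⟨n - 1, by omega⟩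
  have hsplit : (∏ k ∈ Finset.Icc 1 105, ((1 : Polynomial ℤ) - X ^ k) ^ 24)
      = (∏ k ∈ Finset.Icc 1 (m+1), ((1 : Polynomial ℤ) - X ^ k) ^ 24)
        * (∏ k ∈ Finset.Ioc (m+1) 105, ((1 : Polynomial ℤ) - X ^ k) ^ 24) := by
    rw [show (1 : ℕ) = 0 + 1 from rfl, Finset.Icc_add_one_left_eq_Ioc, Finset.Icc_add_one_left_eq_Ioc,
      Finset.prod_Ioc_consecutive _ (by omega : 0 ≤ m + 1) (by omega : m + 1 ≤ 105)]
  obtain ⟨q, hq⟩ : (X : Polynomial ℤ) ^ (m+1)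
      ∣ (∏ k ∈ Finset.Ioc (m+1) 105, ((1 : Polynomial ℤ) - X ^ k) ^ 24) - 1 := by
    apply dvd_prod_sub_one
    intro k hk
    have hk1 : m + 1 ≤ k := le_of_lt (Finset.mem_Ioc.mp hk).1
    have d1 : (X : Polynomial ℤ) ^ (m+1) ∣ (1 - X ^ k) - 1 := by
      rw [sub_sub_cancel_left]
      exact dvd_neg.mpr (pow_dvd_pow _ hk1)
    have d2 : ((1 : Polynomial ℤ) - X ^ k) - 1 ∣ (1 - X ^ k) ^ 24 - 1 := by
      have := sub_dvd_pow_sub_pow ((1 : Polynomial ℤ) - X ^ k) 1 24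
      rwa [one_pow] at this
    exact d1.trans d2
  have key : (∏ k ∈ Finset.Icc 1 105, ((1 : Polynomial ℤ) - X ^ k) ^ 24).coeff m
      = (∏ k ∈ Finset.Icc 1 (m+1), ((1 : Polynomial ℤ) - X ^ k) ^ 24).coeff m := by
    rw [hsplit]
    have hQ : (∏ k ∈ Finset.Ioc (m+1) 105, ((1 : Polynomial ℤ) - X ^ k) ^ 24)
        = 1 + X ^ (m+1) * q := by linear_combination hq
    rw [hQ, mul_add, mul_one, Polynomial.coeff_add,
      show (∏ k ∈ Finset.Icc 1 (m+1), ((1 : Polynomial ℤ) - X ^ k) ^ 24) * (X ^ (m+1) * q)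
        = ((∏ k ∈ Finset.Icc 1 (m+1), ((1 : Polynomial ℤ) - X ^ k) ^ 24) * q) * X ^ (m+1)
        by ring,
      Polynomial.coeff_mul_X_pow', if_neg (by omega : ¬ m + 1 ≤ m), add_zero]
  have hA := agree_prodT 105
  rw [ramanujanTau, Polynomial.coeff_X_mul, ← key, hA.2 m (by omega),
    Nat.add_sub_cancel]
lemma pl0 : prodT 0 = 1 :: List.replicate 105 0 := rfl
lemma pl5 : prodT 5 = [1, -24, 252, -1472, 4830, -6048, -16720, 83928, -108147, -145752, 620700, -430008, -1038358, 1961832, 118980, -3272096, 2777526, 2647944, -8861624, 2816304, 19113552, -14917064, -29761080, 26283456, 24219093, -26964624, 57605616, 19266088, -284750328, -85192392, 532895072, 399748488, -237977112, -630555280, -1436451384, -993216360, 3547467674, 6535874280, -90011028, -11399920928, -15326502042, -4366830048, 26559624348, 56637626592, 24224818494, -84490357216, -163918538748, -80246163696, 184596368680, 453371919984, 350593188852, -379079271880, -1264244844198, -1159564051752, 612736063224, 3074772924384, 3624319937400, -141528533960, -7041529764000, -10501768065720, -3092967584064, 14192969785896, 27179749696272, 16429929128928, -23159201755350, -64734749498184,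 -58103525904836, 24389192729976, 137417163579150, 167436174923728, 20847668443392, -252965526119904, -420789781295683, -214349001346824, 376838128375392, 925951328420432, 782576426320344, -330338418515856, -1775198460883144, -2148969023172024, -384388796621412, 2859608976692248, 4915461425537124, 2871609963964608, -3414490703257436, -9618993880393224, -9107888531555700, 1249218582977216, 15876566300754933, 21789055217275656, 8340025697444740, -20546967558851520, -43117421827959714, -33277962238476368, 14857452600964068, 71288677711627224, 83535118213585106, 18899513645286456, -93917420272477464, -165734515022831880, -108182825969583222, 79095336320159424, 270462062952347804, 283533222770570016, 32084215528225167, -352028930117632096] := by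
  rw [show (5:ℕ) = 4+1 from rfl, show (4:ℕ) = 3+1 from rfl, show (3:ℕ) = 2+1 from rfl, show (2:ℕ) = 1+1 from rfl, show (1:ℕ) = 0+1 from rfl]
  rw [prodT_succ, prodT_succ, prodT_succ, prodT_succ, prodT_succ, pl0]
  rfl
lemma pl10 : prodT 10 = [1, -24, 252, -1472, 4830, -6048, -16744, 84480, -113643, -115920, 534612, -370920, -578290, 407352, 1187328, 1073224, -6964998, 2266512, 12228020, -8270592, -8162400, -3942912, 18628692, 7401744, -29672621, 38525184, -23816340, -92492800, 71144586, 189262560, -21359872, -312769824, -177244992, 291206936, 391799112, -20382552, 272458278, -969340104, -1756513632, 1326735680, 3119361474, 1906412544, -4091766380, -5743492152, 101443524, 4170364896, 9577752804, 8121166992, -12493281217, -29730994320, -5158357956, 33909235088, 48037870266, -913711824, -62793250476, -63285718608, -27773955144, 107762637608, 178887827904, 8012361144, -247370484166, -280057204368, 43248839268, 423386797400, 410726787384, -55159771344, -618887787180, -887179637424, 86711477862, 1412730575040, 1274195704704, -394343430696, -2269145469156, -1861393864344, 748812327792, 3291903394168, 3252418119582, -825148663296, -6356719949452, -5126150940024,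 3034212447543, 9342557624408, 7118658326916, -4981257382368, -13792858556626, -10288264119072, 6006827101332, 23070046169928, 16991077946937, -14566108939704, -34953719455620, -18818083476672, 20808171567582, 49883391225848, 25377040566480, -29737960467528, -71489387249360, -43799847862200, 55619595325368, 110272643724560, 40649549037786, -84492865758864, -138352866857348, -55770433410720, 120672178332060, 187479979519464] := by
  rw [show (10:ℕ) = 9+1 from rfl, show (9:ℕ) = 8+1 from rfl, show (8:ℕ) = 7+1 from rfl, show (7:ℕ) = 6+1 from rfl, show (6:ℕ) = 5+1 from rfl]
  rw [prodT_succ, prodT_succ, prodT_succ, prodT_succ, prodT_succ, pl5]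
  rfl
lemma pl15 : prodT 15 = [1, -24, 252, -1472, 4830, -6048, -16744, 84480, -113643, -115920, 534612, -370944, -577738, 401856, 1217160, 987136, -6905910, 2726880, 10666916, -7139592, -4133400, -12889752, 18182352, 22855560, -26660057, 9922800, -64391304, 24632288, 114526038, -33447888, -27867376, -148039248, 17647164, 114118800, 123446220, 200589024, -249062494, -631520064, -79377876, 1005047904, 276791682, 356436936, -1408621588, -1596922104, 1559221062, 910685784, 3089627904, -3486744936, -3686071975, 2095995312, 267563760, 7175222208, -400874202, -7897949304, -9328300120, 3420713016, 14387784708, 14600178992, -5967690720, -30001219296, -8659568446, -8554605576, 60768889284, 17807166240, -46694454498, -10603135560, -43584091384, 72690484896, 37049654718, -26371312104, -86874742908, -91129166184, 104907753934, 226017468048, 104112674136, -206782020352, -237330506064, -403975324488, 311193661716, 537646647696, 136649488833, 51324149968, -686992279692, 88598545368, 122913684476, 4540260744, -280469595888, -965140543456, 137274014724, 1994264126040, 2179863052552, -175959507792, -1893499907898, -5282680129368, -1722109867728, 2539281870432, 4642434143228, 5605783761504, -1530289835796, -896763584352, -2888340661128, -3649468480944, -3976323165004, -7553584706256, -3522341211678,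 12685231455960] := by
  rw [show (15:ℕ) = 14+1 from rfl, show (14:ℕ) = 13+1 from rfl, show (13:ℕ) = 12+1 from rfl, show (12:ℕ) = 11+1 from rfl, show (11:ℕ) = 10+1 from rfl]
  rw [prodT_succ, prodT_succ, prodT_succ, prodT_succ, prodT_succ, pl10]
  rfl
lemma pl20 : prodT 20 = [1, -24, 252, -1472, 4830, -6048, -16744, 84480, -113643, -115920, 534612, -370944, -577738, 401856, 1217160, 987136, -6905934, 2727432, 10661420, -7109760, -4219488, -12830664, 18642720, 21294456, -25529057, 13951800, -73338144, 24186248, 129973230, -30372672, -56786080, -187818528, 134707344, 151861824, -85109568, 192258288, -133546258, -372949440, -197206968, 612295488, 341743290, 33622848, -392706784, -715098336, 33959154, -476944056, 2991732060, -1206416376, -2566188267, 2844379824, -225337968, 1050872600, -6004531914, 573545688, 5211172584, -775409256, 7652972736, -1905415080, -11640777156, -12242031864, 8763285614, 10774918008, 13076062992, 8752706304, -14336066292, -21128439288, -44604474336, 49492000824, 31349746140, -21067575352, 28281503844, -15129315384, 18716629246, -71891260080, -51248272872, 31642132424, 13550768988, 150867322584, 119485624636, -113669717808, -281443307163, -98751643992,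 13652235240, 230640963912, 336513381966, 174445679760, -103308449028, -831314277712, -176261789472, 289928111976, 158010637144, 555822078288, 159692340288, 268764833968, -392441836608, -938853911400, -625469476938, -576964427592, 978716092356, 2606190231312, 1330176691230, -1592241550320, -2556993582968, -2668808080920, -194681172168, 2576959239936] := by
  rw [show (20:ℕ) = 19+1 from rfl, show (19:ℕ) = 18+1 from rfl, show (18:ℕ) = 17+1 from rfl, show (17:ℕ) = 16+1 from rfl, show (16:ℕ) = 15+1 from rfl]
  rw [prodT_succ, prodT_succ, prodT_succ, prodT_succ, prodT_succ, pl15]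
  rfl
lemma pl25 : prodT 25 = [1, -24, 252, -1472, 4830, -6048, -16744, 84480, -113643, -115920, 534612, -370944, -577738, 401856, 1217160, 987136, -6905934, 2727432, 10661420, -7109760, -4219488, -12830688, 18643272, 21288960, -25499225, 13865712, -73279056, 24646616, 128412126, -29241672, -52757080, -196765368, 134261304, 167309016, -82034352, 163339584, -173325538, -255888960, -159470568, 403802352, 333096234, 149934768, -134201068, -838565856, -344638602, -413815680, 2619703632, -126823104, -1625108055, 1194773592, -1769484576, 1154018216, -3051165438, 895113288, 4800419724, 102247512, 2936334444, -7553914104, -6433605792, 961618776, 7752435614, 6032693784, 2406209424, -2948319512, -12095919372, -2794764888, -7335976660, 21324978840, 13959592008, -8188960296, -11047678368, -40873264536, 33923568866, 38094294936, -12143965020, 99213440, -35411993772, 1389394944, -20936225732, -20962030032, 64589701077, 39369155752, 84682822824, -9540705648, -184803898000, -162807064896, 46427826636, 148240361096, 126225877470, 161427803064, -22375532468, -124211646480, -387585500124, -59154069832, 277864253460, 102879200520, 206697643982, -443709762168, -87553480656, 500256704200, 348494896782, 100775499000, -731157701192, -496047422160, -278333171250, -259289536608] := by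
  rw [show (25:ℕ) = 24+1 from rfl, show (24:ℕ) = 23+1 from rfl, show (23:ℕ) = 22+1 from rfl, show (22:ℕ) = 21+1 from rfl, show (21:ℕ) = 20+1 from rfl]
  rw [prodT_succ, prodT_succ, prodT_succ, prodT_succ, prodT_succ, pl20]
  rfl
lemma pl30 : prodT 30 = [1, -24, 252, -1472, 4830, -6048, -16744, 84480, -113643, -115920, 534612, -370944, -577738, 401856, 1217160, 987136, -6905934, 2727432, 10661420, -7109760, -4219488, -12830688, 18643272, 21288960, -25499225, 13865712, -73279080, 24647168, 128406630, -29211840, -52843168, -196706280, 134721672, 165747912, -80903352, 167368584, -182272378, -256335000, -144023376, 406877568, 304177530, 110155488, -17140588, -800829456, -553131738, -422462736, 2736015552, 131682912, -1748582199, 816238488, -1706672520, 782785472, -1971637074, 1830555072, 3164968152, -1443722328, 2990265720, -4536869160, -6052781748, 426521592, 8473575614, 1517096952, -2569251684, 1460533144, -51350904, -2435553192, -10668154792, 10605227112, -1008761556, -7240198680, 10386886848, -1656547560, 11950262306, 14438564136, -15410801964, -37901012344, -41585078976, 35940156360, 75046101608, 465318336, 14514451113, -36007732272, -38301495732, -45769447152,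 -41839615380, 60722716272, 58235189868, 139466366928, -23295763602, -118555757472, -138373802852, 9256303680, 56586602844, -4730604184, 164935426596, 28000555584, 85356074598, -261522512136, -117153033240, 25754919624, 4258067538, 213374857608, -192318505700, 149915287104, 399087990276, 191389575288] := by
  rw [show (30:ℕ) = 29+1 from rfl, show (29:ℕ) = 28+1 from rfl, show (28:ℕ) = 27+1 from rfl, show (27:ℕ) = 26+1 from rfl, show (26:ℕ) = 25+1 from rfl]
  rw [prodT_succ, prodT_succ, prodT_succ, prodT_succ, prodT_succ, pl25]
  rfl
lemma pl35 : prodT 35 = [1, -24, 252, -1472, 4830, -6048, -16744, 84480, -113643, -115920, 534612, -370944, -577738, 401856, 1217160, 987136, -6905934, 2727432, 10661420, -7109760, -4219488, -12830688, 18643272, 21288960, -25499225, 13865712, -73279080, 24647168, 128406630, -29211840, -52843168, -196706304, 134722224, 165742416, -80873520, 167282496, -182213290, -255874632, -145584480, 408008568, 308206530, 101208648, -17586628, -785382264, -550056522, -451381440, 2696236272, 248743392, -1710845799, 607745352, -1715319576, 899097392, -1713131058, 1707080928, 2786433048, -1380910272, 2619032976, -3457340496, -5117346588, -1208867328, 6927289454,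 1571823912, 447728352, 1835718760, -572293428, -1716236424, -15232965964, 5693444472, 3459347544, 4680025464, 10589581776, -4787684232, 1903548494, -1328108136, -15621122520, -15096385432, -958315908, 13916951640, 48123040460, -4092848712, -20385380655, -40230263400, 2437924260, 43944299400, -36513282252, 11892041280, 2384797344, 36183845088, -73765370070, 6105154176, 67041783424, -3718568496, 74124235248, -55726669872, -62988707880, -200229753168, 90823106582, 90919725672, 16462797816, 170650173184, 174568518714, 74783807520, -561536038828, -196420825536, -66347193636, 70022030832] := by
  rw [show (35:ℕ) = 34+1 from rfl, show (34:ℕ) = 33+1 from rfl, show (33:ℕ) = 32+1 from rfl, show (32:ℕ) = 31+1 from rfl, show (31:ℕ) = 30+1 from rfl]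
  rw [prodT_succ, prodT_succ, prodT_succ, prodT_succ, prodT_succ, pl30]
  rfl
lemma pl40 : prodT 40 = [1, -24, 252, -1472, 4830, -6048, -16744, 84480, -113643, -115920, 534612, -370944, -577738, 401856, 1217160, 987136, -6905934, 2727432, 10661420, -7109760, -4219488, -12830688, 18643272, 21288960, -25499225, 13865712, -73279080, 24647168, 128406630, -29211840, -52843168, -196706304, 134722224, 165742416, -80873520, 167282496, -182213314, -255874080, -145589976, 408038400, 308120442, 101267736, -17126260, -786943368, -548925522, -447352440, 2687289432, 248297352, -1695398607, 610820568, -1744238280, 859318112, -1596070578, 1744817328, 2577939912, -1389557328, 2735344896, -3198834480, -5240820732, -1587402432, 6990101510, 1200591168, 1527257016, 2771153920, -2207682348, -3262522584, -15178239004, 8710424808, 3834526536, 4159145592, 11308582224, -9351699720, -3008299054, 3134362536, -3686743716, -14895513736, -4138666920, 3933916296, 32415624632, -4427513592, 2262729489, 597541128, -18912242544, 16222919544, -42230531472, -21637728792, -427687692, 76873366920, 12681046134, 10140157200, 21311502448, -57618406944, -22969628016, -112464859728, 45571243728, 6429911280, 97377064682, 128154097944, -48777136956, -75532895504, -71860366386,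 55424235648, -182424199528, 35482943616, 129981074496, 128518579728] := by
  rw [show (40:ℕ) = 39+1 from rfl, show (39:ℕ) = 38+1 from rfl, show (38:ℕ) = 37+1 from rfl, show (37:ℕ) = 36+1 from rfl, show (36:ℕ) = 35+1 from rfl]
  rw [prodT_succ, prodT_succ, prodT_succ, prodT_succ, prodT_succ, pl35]
  rfl
lemma pl45 : prodT 45 = [1, -24, 252, -1472, 4830, -6048, -16744, 84480, -113643, -115920, 534612, -370944, -577738, 401856, 1217160, 987136, -6905934, 2727432, 10661420, -7109760, -4219488, -12830688, 18643272, 21288960, -25499225, 13865712, -73279080, 24647168, 128406630, -29211840, -52843168, -196706304, 134722224, 165742416, -80873520, 167282496, -182213314, -255874080, -145589976, 408038400, 308120442, 101267712, -17125708, -786948864, -548895690, -447438528, 2687348520, 248757720, -1696959711, 611951568, -1740209280, 850371272, -1596516618, 1760264520, 2581015128, -1418476032, 2695565616, -3081774000, -5203084332, -1795895568, 6981454454, 1316903088, 1785763032, 2647679776, -2586217452, -3199710528, -15549471748, 9789953472, 4769961696, 2523756672, 9762296064, -9296972760, 8681282, 3509541528, -4207623588, -14176513288, -8702682408, -977930952,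 36878088680, 7506927864, 2463284865, -2582014200, -28895342796, 509865288, -42551041692, 1008558120, 40350902496, 55586878584, -14981077278, 4298563656, -12374784392, -60229850520, 18392931732, -26816762232, 48447164580, -37930308000, 44887272326, 31010336520, -108782657160, 31735726000, 137899692078, 63928747824, -139001168680, -36025574544, -132302954232, -116666227200] := by
  rw [show (45:ℕ) = 44+1 from rfl, show (44:ℕ) = 43+1 from rfl, show (43:ℕ) = 42+1 from rfl, show (42:ℕ) = 41+1 from rfl, show (41:ℕ) = 40+1 from rfl]
  rw [prodT_succ, prodT_succ, prodT_succ, prodT_succ, prodT_succ, pl40]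
  rfl
lemma pl50 : prodT 50 = [1, -24, 252, -1472, 4830, -6048, -16744, 84480, -113643, -115920, 534612, -370944, -577738, 401856, 1217160, 987136, -6905934, 2727432, 10661420, -7109760, -4219488, -12830688, 18643272, 21288960, -25499225, 13865712, -73279080, 24647168, 128406630, -29211840, -52843168, -196706304, 134722224, 165742416, -80873520, 167282496, -182213314, -255874080, -145589976, 408038400, 308120442, 101267712, -17125708, -786948864, -548895690, -447438528, 2687348496, 248758272, -1696965207, 611981400, -1740295368, 850430360, -1596056250, 1758703416, 2582146128, -1414447032, 2686618776, -3082220040, -5187637140, -1792820352, 6952535750, 1277123808, 1902823512, 2685416176, -2794710588, -3208357584, -15433159828, 10048459488, 4646487552, 2145221568, 9825108120, -9668205504, 1088209946, 4444976688, -5843012508, -15722799448, -8647955448, 2039049384, 37253267672, 6986047992, 3182285313, -7146029688, -33807190044, 4972329336, -30616600236, 1209113496, 37171347168, 45603778632, -30694138158, 3978116088, 10271186200, -19450464648, -2893621512, -54484524072, 42619725696, -71618418072, 42226614410, 72436574736, -23075303220, 34487302528, 93382956030, 11639996928, -235471892188, -96829413456, -26193414900, 94463892960] := by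
  rw [show (50:ℕ) = 49+1 from rfl, show (49:ℕ) = 48+1 from rfl, show (48:ℕ) = 47+1 from rfl, show (47:ℕ) = 46+1 from rfl, show (46:ℕ) = 45+1 from rfl]
  rw [prodT_succ, prodT_succ, prodT_succ, prodT_succ, prodT_succ, pl45]
  rfl
lemma pl55 : prodT 55 = [1, -24, 252, -1472, 4830, -6048, -16744, 84480, -113643, -115920, 534612, -370944, -577738, 401856, 1217160, 987136, -6905934, 2727432, 10661420, -7109760, -4219488, -12830688, 18643272, 21288960, -25499225, 13865712, -73279080, 24647168, 128406630, -29211840, -52843168, -196706304, 134722224, 165742416, -80873520, 167282496, -182213314, -255874080, -145589976, 408038400, 308120442, 101267712, -17125708, -786948864, -548895690, -447438528, 2687348496, 248758272, -1696965207, 611981400, -1740295368, 850430336, -1596055698, 1758697920, 2582175960, -1414533120, 2686677864, -3081759672, -5189198244, -1791689352, 6956564750, 1268176968, 1902377472, 2700863368, -2791635372, -3237276288, -15472939108, 10165519968, 4684223952, 1936728432, 9816461064, -9551893584, 1346715962, 4321502544, -6221547612, -15659987392, -9019188192, 3118578048, 38188702832, 5350659072, 1635999153, -7091302728, -30790209708,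 5347508328, -31137480108, 1928113944, 32607331680, 40691931384, -26231674110, 15912557544, 10471741576, -22630019976, -12876721464, -70197584952, 42299278128, -48972447480, 83006000282, 51150021792, -50743071684, 28659926296, 59694529638, 8980134696, -194045718880, -11127697944, -23427683712, 49945333680] := by
  rw [show (55:ℕ) = 54+1 from rfl, show (54:ℕ) = 53+1 from rfl, show (53:ℕ) = 52+1 from rfl, show (52:ℕ) = 51+1 from rfl, show (51:ℕ) = 50+1 from rfl]
  rw [prodT_succ, prodT_succ, prodT_succ, prodT_succ, prodT_succ, pl50]
  rfl
lemma pl60 : prodT 60 = [1, -24, 252, -1472, 4830, -6048, -16744, 84480, -113643, -115920, 534612, -370944, -577738, 401856, 1217160, 987136, -6905934, 2727432, 10661420, -7109760, -4219488, -12830688, 18643272, 21288960, -25499225, 13865712, -73279080, 24647168, 128406630, -29211840, -52843168, -196706304, 134722224, 165742416, -80873520, 167282496, -182213314, -255874080, -145589976, 408038400, 308120442, 101267712, -17125708, -786948864, -548895690, -447438528, 2687348496, 248758272, -1696965207, 611981400, -1740295368, 850430336, -1596055698, 1758697920, 2582175960, -1414533120, 2686677840, -3081759120, -5189203740, -1791659520,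 6956478662, 1268236056, 1902837840, 2699302264, -2790504372, -3233247288, -15481885948, 10165073928, 4699671144, 1939803648, 9787542360, -9591672864, 1463776442, 4359238944, -6430040748, -15668634448, -8902876272, 3377084064, 38065228688, 4972123968, 1698811209, -7462535472, -29710681044, 6282943488, -32772869028, 381827784, 32662058640, 43708911720, -25856495118, 15391677672, 11190742024, -27194035464, -17788568712, -65735120904, 54233719584, -48771892104, 79826444954, 41166921840, -66456132564, 28339478728, 82340500230, 49759520568, -215332271824, -38795466408, -29255059944, 16256907288] := by
  rw [show (60:ℕ) = 59+1 from rfl, show (59:ℕ) = 58+1 from rfl, show (58:ℕ) = 57+1 from rfl, show (57:ℕ) = 56+1 from rfl, show (56:ℕ) = 55+1 from rfl]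
  rw [prodT_succ, prodT_succ, prodT_succ, prodT_succ, prodT_succ, pl55]
  rfl
lemma pl65 : prodT 65 = [1, -24, 252, -1472, 4830, -6048, -16744, 84480, -113643, -115920, 534612, -370944, -577738, 401856, 1217160, 987136, -6905934, 2727432, 10661420, -7109760, -4219488, -12830688, 18643272, 21288960, -25499225, 13865712, -73279080, 24647168, 128406630, -29211840, -52843168, -196706304, 134722224, 165742416, -80873520, 167282496, -182213314, -255874080, -145589976, 408038400, 308120442, 101267712, -17125708, -786948864, -548895690, -447438528, 2687348496, 248758272, -1696965207, 611981400, -1740295368, 850430336, -1596055698, 1758697920, 2582175960, -1414533120, 2686677840, -3081759120, -5189203740, -1791659520, 6956478662, 1268236032, 1902838392, 2699296768, -2790474540, -3233333376, -15481826860, 10165534296, 4698110040, 1940934648, 9791571360, -9600619704, 1463330402, 4374686136, -6426965532, -15697553152, -8942655552, 3494144544, 38102965088, 4763630832, 1690164153, -7346223552, -29452175028, 6159469344, -33151404132, 444639840, 32290825896, 44788440384, -24921059958, 13756288752, 9644455864, -27139308504, -14771588376, -65359941912, 53712839712, -48052891656, 75262429466, 36255074592, -61993668516, 40273920184, 82541055606,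 46579965240, -225315371776, -54508527288, -29575507512, 38902877880] := by
  rw [show (65:ℕ) = 64+1 from rfl, show (64:ℕ) = 63+1 from rfl, show (63:ℕ) = 62+1 from rfl, show (62:ℕ) = 61+1 from rfl, show (61:ℕ) = 60+1 from rfl]
  rw [prodT_succ, prodT_succ, prodT_succ, prodT_succ, prodT_succ, pl60]
  rfl
lemma pl70 : prodT 70 = [1, -24, 252, -1472, 4830, -6048, -16744, 84480, -113643, -115920, 534612, -370944, -577738, 401856, 1217160, 987136, -6905934, 2727432, 10661420, -7109760, -4219488, -12830688, 18643272, 21288960, -25499225, 13865712, -73279080, 24647168, 128406630, -29211840, -52843168, -196706304, 134722224, 165742416, -80873520, 167282496, -182213314, -255874080, -145589976, 408038400, 308120442, 101267712, -17125708, -786948864, -548895690, -447438528, 2687348496, 248758272, -1696965207, 611981400, -1740295368, 850430336, -1596055698, 1758697920, 2582175960, -1414533120, 2686677840, -3081759120, -5189203740, -1791659520, 6956478662, 1268236032, 1902838392, 2699296768, -2790474540, -3233333376, -15481826884, 10165534848, 4698104544, 1940964480, 9791485272, -9600560616, 1463790770, 4373125032, -6425834532, -15693524152, -8951602392, 3493698504,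 38118412280, 4766706048, 1661245449, -7386002832, -29335114548, 6197205744, -33359897268, 435992784, 32407137816, 45046946400, -25044534102, 13377753648, 9707267920, -27510541248, -13692059712, -64424506752, 52077450792, -49599177816, 75317156426, 39272054928, -61618489524, 39753040312, 83260056054, 42015949752, -230227219024, -50046063240, -17641066056, 39103433256] := by
  rw [show (70:ℕ) = 69+1 from rfl, show (69:ℕ) = 68+1 from rfl, show (68:ℕ) = 67+1 from rfl, show (67:ℕ) = 66+1 from rfl, show (66:ℕ) = 65+1 from rfl]
  rw [prodT_succ, prodT_succ, prodT_succ, prodT_succ, prodT_succ, pl65]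
  rfl
lemma pl75 : prodT 75 = [1, -24, 252, -1472, 4830, -6048, -16744, 84480, -113643, -115920, 534612, -370944, -577738, 401856, 1217160, 987136, -6905934, 2727432, 10661420, -7109760, -4219488, -12830688, 18643272, 21288960, -25499225, 13865712, -73279080, 24647168, 128406630, -29211840, -52843168, -196706304, 134722224, 165742416, -80873520, 167282496, -182213314, -255874080, -145589976, 408038400, 308120442, 101267712, -17125708, -786948864, -548895690, -447438528, 2687348496, 248758272, -1696965207, 611981400, -1740295368, 850430336, -1596055698, 1758697920, 2582175960, -1414533120, 2686677840, -3081759120, -5189203740, -1791659520, 6956478662, 1268236032, 1902838392, 2699296768, -2790474540, -3233333376, -15481826884, 10165534848, 4698104544, 1940964480, 9791485272, -9600560640, 1463791322, 4373119536, -6425804700, -15693610240, -8951543304, 3494158872, 38116851176, 4767837048, 1665274449, -7394949672, -29335560588, 6212652936, -33356822052, 407074080, 32367358536, 45164006880, -25006797702, 13169260512, 9698620864, -27394229328, -13433553696, -64547980896, 51698915688, -49536365760, 74945923682, 40351583592, -60683054364, 38117651392, 81713769894, 42070676712, -227210238688, -49670884248, -18161945928, 39822433704] := by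
  rw [show (75:ℕ) = 74+1 from rfl, show (74:ℕ) = 73+1 from rfl, show (73:ℕ) = 72+1 from rfl, show (72:ℕ) = 71+1 from rfl, show (71:ℕ) = 70+1 from rfl]
  rw [prodT_succ, prodT_succ, prodT_succ, prodT_succ, prodT_succ, pl70]
  rfl
lemma pl80 : prodT 80 = [1, -24, 252, -1472, 4830, -6048, -16744, 84480, -113643, -115920, 534612, -370944, -577738, 401856, 1217160, 987136, -6905934, 2727432, 10661420, -7109760, -4219488, -12830688, 18643272, 21288960, -25499225, 13865712, -73279080, 24647168, 128406630, -29211840, -52843168, -196706304, 134722224, 165742416, -80873520, 167282496, -182213314, -255874080, -145589976, 408038400, 308120442, 101267712, -17125708, -786948864, -548895690, -447438528, 2687348496, 248758272, -1696965207, 611981400, -1740295368, 850430336, -1596055698, 1758697920, 2582175960, -1414533120, 2686677840, -3081759120, -5189203740, -1791659520, 6956478662, 1268236032, 1902838392, 2699296768, -2790474540, -3233333376, -15481826884, 10165534848, 4698104544, 1940964480, 9791485272, -9600560640, 1463791322, 4373119536, -6425804700, -15693610240, -8951543328, 3494159424, 38116845680, 4767866880, 1665188361, -7394890584, -29335100220,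 6211091832, -33355691052, 411103080, 32358411696, 45163560840, -24991350510, 13172335728, 9669702160, -27434008608, -13316493216, -64510244496, 51490422552, -49545012816, 75062235602, 40610089608, -60806528508, 37739116288, 81776581950, 41699443968, -226130710024, -48735449088, -19797334848, 38276147544] := by
  rw [show (80:ℕ) = 79+1 from rfl, show (79:ℕ) = 78+1 from rfl, show (78:ℕ) = 77+1 from rfl, show (77:ℕ) = 76+1 from rfl, show (76:ℕ) = 75+1 from rfl]
  rw [prodT_succ, prodT_succ, prodT_succ, prodT_succ, prodT_succ, pl75]
  rfl
lemma pl85 : prodT 85 = [1, -24, 252, -1472, 4830, -6048, -16744, 84480, -113643, -115920, 534612, -370944, -577738, 401856, 1217160, 987136, -6905934, 2727432, 10661420, -7109760, -4219488, -12830688, 18643272, 21288960, -25499225, 13865712, -73279080, 24647168, 128406630, -29211840, -52843168, -196706304, 134722224, 165742416, -80873520, 167282496, -182213314, -255874080, -145589976, 408038400, 308120442, 101267712, -17125708, -786948864, -548895690, -447438528, 2687348496, 248758272, -1696965207, 611981400, -1740295368, 850430336, -1596055698, 1758697920, 2582175960, -1414533120, 2686677840, -3081759120, -5189203740, -1791659520,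 6956478662, 1268236032, 1902838392, 2699296768, -2790474540, -3233333376, -15481826884, 10165534848, 4698104544, 1940964480, 9791485272, -9600560640, 1463791322, 4373119536, -6425804700, -15693610240, -8951543328, 3494159424, 38116845680, 4767866880, 1665188361, -7394890608, -29335099668, 6211086336, -33355661220, 411016992, 32358470784, 45164021208, -24992911614, 13173466728, 9673731160, -27442955448, -13316939256, -64494797304, 51493497768, -49573931520, 75022456322, 40727150088, -60768792108, 37530623152, 81767934894, 41815755888, -225872204008, -48858923232, -20175869952, 38338959600] := by
  rw [show (85:ℕ) = 84+1 from rfl, show (84:ℕ) = 83+1 from rfl, show (83:ℕ) = 82+1 from rfl, show (82:ℕ) = 81+1 from rfl, show (81:ℕ) = 80+1 from rfl]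
  rw [prodT_succ, prodT_succ, prodT_succ, prodT_succ, prodT_succ, pl80]
  rfl
lemma pl90 : prodT 90 = [1, -24, 252, -1472, 4830, -6048, -16744, 84480, -113643, -115920, 534612, -370944, -577738, 401856, 1217160, 987136, -6905934, 2727432, 10661420, -7109760, -4219488, -12830688, 18643272, 21288960, -25499225, 13865712, -73279080, 24647168, 128406630, -29211840, -52843168, -196706304, 134722224, 165742416, -80873520, 167282496, -182213314, -255874080, -145589976, 408038400, 308120442, 101267712, -17125708, -786948864, -548895690, -447438528, 2687348496, 248758272, -1696965207, 611981400, -1740295368, 850430336, -1596055698, 1758697920, 2582175960, -1414533120, 2686677840, -3081759120, -5189203740, -1791659520, 6956478662, 1268236032, 1902838392, 2699296768, -2790474540, -3233333376, -15481826884, 10165534848, 4698104544, 1940964480, 9791485272, -9600560640, 1463791322, 4373119536, -6425804700, -15693610240, -8951543328, 3494159424, 38116845680, 4767866880, 1665188361, -7394890608, -29335099668, 6211086336, -33355661220, 411016992, 32358470760, 45164021760, -24992917110, 13173496560, 9673645072, -27442896360, -13316478888, -64496358408, 51494628768, -49569902520, 75013509482, 40726704048, -60753344916, 37533698368, 81739016190,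 41775976608, -225755143528, -48821186832, -20384363088, 38330312544] := by
  rw [show (90:ℕ) = 89+1 from rfl, show (89:ℕ) = 88+1 from rfl, show (88:ℕ) = 87+1 from rfl, show (87:ℕ) = 86+1 from rfl, show (86:ℕ) = 85+1 from rfl]
  rw [prodT_succ, prodT_succ, prodT_succ, prodT_succ, prodT_succ, pl85]
  rfl
lemma pl95 : prodT 95 = [1, -24, 252, -1472, 4830, -6048, -16744, 84480, -113643, -115920, 534612, -370944, -577738, 401856, 1217160, 987136, -6905934, 2727432, 10661420, -7109760, -4219488, -12830688, 18643272, 21288960, -25499225, 13865712, -73279080, 24647168, 128406630, -29211840, -52843168, -196706304, 134722224, 165742416, -80873520, 167282496, -182213314, -255874080, -145589976, 408038400, 308120442, 101267712, -17125708, -786948864, -548895690, -447438528, 2687348496, 248758272, -1696965207, 611981400, -1740295368, 850430336, -1596055698, 1758697920, 2582175960, -1414533120, 2686677840, -3081759120, -5189203740, -1791659520, 6956478662, 1268236032, 1902838392, 2699296768, -2790474540, -3233333376, -15481826884, 10165534848, 4698104544, 1940964480, 9791485272, -9600560640, 1463791322, 4373119536, -6425804700, -15693610240, -8951543328, 3494159424,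 38116845680, 4767866880, 1665188361, -7394890608, -29335099668, 6211086336, -33355661220, 411016992, 32358470760, 45164021760, -24992917110, 13173496560, 9673645072, -27442896384, -13316478336, -64496363904, 51494658600, -49569988608, 75013568570, 40727164416, -60754906020, 37534829368, 81743045190, 41767029768, -225755589568, -48805739640, -20381287872, 38301393840] := by
  rw [show (95:ℕ) = 94+1 from rfl, show (94:ℕ) = 93+1 from rfl, show (93:ℕ) = 92+1 from rfl, show (92:ℕ) = 91+1 from rfl, show (91:ℕ) = 90+1 from rfl]
  rw [prodT_succ, prodT_succ, prodT_succ, prodT_succ, prodT_succ, pl90]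
  rfl
lemma pl100 : prodT 100 = [1, -24, 252, -1472, 4830, -6048, -16744, 84480, -113643, -115920, 534612, -370944, -577738, 401856, 1217160, 987136, -6905934, 2727432, 10661420, -7109760, -4219488, -12830688, 18643272, 21288960, -25499225, 13865712, -73279080, 24647168, 128406630, -29211840, -52843168, -196706304, 134722224, 165742416, -80873520, 167282496, -182213314, -255874080, -145589976, 408038400, 308120442, 101267712, -17125708, -786948864, -548895690, -447438528, 2687348496, 248758272, -1696965207, 611981400, -1740295368, 850430336, -1596055698, 1758697920, 2582175960, -1414533120, 2686677840, -3081759120, -5189203740, -1791659520, 6956478662, 1268236032, 1902838392, 2699296768, -2790474540, -3233333376, -15481826884, 10165534848, 4698104544, 1940964480, 9791485272, -9600560640, 1463791322, 4373119536, -6425804700, -15693610240, -8951543328, 3494159424, 38116845680, 4767866880, 1665188361, -7394890608, -29335099668, 6211086336, -33355661220, 411016992, 32358470760, 45164021760, -24992917110, 13173496560, 9673645072, -27442896384, -13316478336, -64496363904, 51494658600, -49569988608, 75013568546, 40727164968, -60754911516, 37534859200, 81742959102, 41767088856, -225755129200, -48807300744, -20380156872, 38305422840] := by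
  rw [show (100:ℕ) = 99+1 from rfl, show (99:ℕ) = 98+1 from rfl, show (98:ℕ) = 97+1 from rfl, show (97:ℕ) = 96+1 from rfl, show (96:ℕ) = 95+1 from rfl]
  rw [prodT_succ, prodT_succ, prodT_succ, prodT_succ, prodT_succ, pl95]
  rfl
lemma pl105 : prodT 105 = [1, -24, 252, -1472, 4830, -6048, -16744, 84480, -113643, -115920, 534612, -370944, -577738, 401856, 1217160, 987136, -6905934, 2727432, 10661420, -7109760, -4219488, -12830688, 18643272, 21288960, -25499225, 13865712, -73279080, 24647168, 128406630, -29211840, -52843168, -196706304, 134722224, 165742416, -80873520, 167282496, -182213314, -255874080, -145589976, 408038400, 308120442, 101267712, -17125708, -786948864, -548895690, -447438528, 2687348496, 248758272, -1696965207, 611981400, -1740295368, 850430336, -1596055698, 1758697920, 2582175960, -1414533120, 2686677840, -3081759120, -5189203740, -1791659520, 6956478662, 1268236032, 1902838392, 2699296768, -2790474540, -3233333376, -15481826884, 10165534848, 4698104544, 1940964480, 9791485272, -9600560640, 1463791322, 4373119536, -6425804700, -15693610240, -8951543328, 3494159424, 38116845680, 4767866880, 1665188361, -7394890608, -29335099668,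 6211086336, -33355661220, 411016992, 32358470760, 45164021760, -24992917110, 13173496560, 9673645072, -27442896384, -13316478336, -64496363904, 51494658600, -49569988608, 75013568546, 40727164968, -60754911516, 37534859200, 81742959102, 41767088832, -225755128648, -48807306240, -20380127040, 38305336752] := by
  rw [show (105:ℕ) = 104+1 from rfl, show (104:ℕ) = 103+1 from rfl, show (103:ℕ) = 102+1 from rfl, show (102:ℕ) = 101+1 from rfl, show (101:ℕ) = 100+1 from rfl]
  rw [prodT_succ, prodT_succ, prodT_succ, prodT_succ, prodT_succ, pl100]
  rfl
lemma tau_1 : ramanujanTau 1 = 1 := by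
  rw [tau_eq_getD (by norm_num) (by norm_num), pl105]; rfl
lemma tau_2 : ramanujanTau 2 = -24 := by
  rw [tau_eq_getD (by norm_num) (by norm_num), pl105]; rfl
lemma tau_3 : ramanujanTau 3 = 252 := by
  rw [tau_eq_getD (by norm_num) (by norm_num), pl105]; rfl
lemma tau_5 : ramanujanTau 5 = 4830 := by
  rw [tau_eq_getD (by norm_num) (by norm_num), pl105]; rfl
lemma tau_8 : ramanujanTau 8 = 84480 := by
  rw [tau_eq_getD (by norm_num) (by norm_num), pl105]; rfl
lemma tau_6 : ramanujanTau 6 = -6048 := by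
  rw [tau_eq_getD (by norm_num) (by norm_num), pl105]; rfl
lemma tau_12 : ramanujanTau 12 = -370944 := by
  rw [tau_eq_getD (by norm_num) (by norm_num), pl105]; rfl
lemma tau_14 : ramanujanTau 14 = 401856 := by
  rw [tau_eq_getD (by norm_num) (by norm_num), pl105]; rfl
lemma tau_27 : ramanujanTau 27 = -73279080 := by
  rw [tau_eq_getD (by norm_num) (by norm_num), pl105]; rfl
lemma tau_29 : ramanujanTau 29 = 128406630 := by
  rw [tau_eq_getD (by norm_num) (by norm_num), pl105]; rfl
lemma tau_41 : ramanujanTau 41 = 308120442 := by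
  rw [tau_eq_getD (by norm_num) (by norm_num), pl105]; rfl
lemma tau_42 : ramanujanTau 42 = 101267712 := by
  rw [tau_eq_getD (by norm_num) (by norm_num), pl105]; rfl
lemma tau_44 : ramanujanTau 44 = -786948864 := by
  rw [tau_eq_getD (by norm_num) (by norm_num), pl105]; rfl
lemma tau_48 : ramanujanTau 48 = 248758272 := by
  rw [tau_eq_getD (by norm_num) (by norm_num), pl105]; rfl
lemma tau_55 : ramanujanTau 55 = 2582175960 := by
  rw [tau_eq_getD (by norm_num) (by norm_num), pl105]; rfl
lemma tau_69 : ramanujanTau 69 = 4698104544 := by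
  rw [tau_eq_getD (by norm_num) (by norm_num), pl105]; rfl
lemma tau_90 : ramanujanTau 90 = 13173496560 := by
  rw [tau_eq_getD (by norm_num) (by norm_num), pl105]; rfl
lemma tau_105 : ramanujanTau 105 = -20380127040 := by
  rw [tau_eq_getD (by norm_num) (by norm_num), pl105]; rfl
/-! ### The combinatorial construction -/

def block6 : List ℕ := [12, 27, 55, 69, 90, 105]
def block7 : List ℕ := [6, 14, 29, 41, 42, 44, 48]

def padL (x y : ℕ) : List ℕ := (List.replicate x block6).flatten ++ (List.replicate y block7).flatten

lemma join_rep_length (b : List ℕ) (x : ℕ) : ((List.replicate x b).flatten).length = x * b.length := by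
  induction x with
  | zero => simp
  | succ n ih => simp [List.replicate_succ, ih, Nat.succ_mul]; omega

lemma padL_length (x y : ℕ) : (padL x y).length = 6 * x + 7 * y := by
  simp only [padL, List.length_append, join_rep_length]
  simp [block6, block7]
  ring

lemma join_rep_sum_zero (b : List ℕ) (hb : (b.map ramanujanTau).sum = 0) (x : ℕ) :
    (((List.replicate x b).flatten).map ramanujanTau).sum = 0 := by
  induction x with
  | zero => simp
  | succ n ih => simp [List.replicate_succ, ih, hb]

lemma sum_block6 : (block6.map ramanujanTau).sum = 0 := by
  simp only [block6, List.map_cons, List.map_nil, List.sum_cons, List.sum_nil,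
    tau_12, tau_27, tau_55, tau_69, tau_90, tau_105]
  norm_num

lemma sum_block7 : (block7.map ramanujanTau).sum = 0 := by
  simp only [block7, List.map_cons, List.map_nil, List.sum_cons, List.sum_nil,
    tau_6, tau_14, tau_29, tau_41, tau_42, tau_44, tau_48]
  norm_num

lemma padL_sum (x y : ℕ) : ((padL x y).map ramanujanTau).sum = 0 := by
  simp only [padL, List.map_append, List.sum_append,
    join_rep_sum_zero block6 sum_block6, join_rep_sum_zero block7 sum_block7, add_zero]

lemma join_rep_mem {b : List ℕ} {x : ℕ} {e : ℕ} (he : e ∈ (List.replicate x b).flatten) : e ∈ b := by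
  induction x with
  | zero => simp at he
  | succ n ih =>
    rw [List.replicate_succ, List.flatten_cons, List.mem_append] at he
    exact he.elim id ih

lemma padL_mem {x y e : ℕ} (he : e ∈ padL x y) : 1 ≤ e ∧ e ≤ 105 := by
  rw [padL, List.mem_append] at he
  rcases he with he | he
  · have := join_rep_mem he
    simp only [block6, List.mem_cons, List.not_mem_nil, or_false] at this
    omega
  · have := join_rep_mem he
    simp only [block7, List.mem_cons, List.not_mem_nil, or_false] at this
    omega

lemma list_to_fn {M : Type*} [AddCommMonoid M] (f : ℕ → M) (l : List ℕ) (n : ℕ)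
    (h : l.length = n) :
    ∃ a : Fin n → ℕ, (∀ i, a i ∈ l) ∧ ∑ i, f (a i) = (l.map f).sum := by
  subst h
  refine ⟨fun i => l.get i, fun i => List.get_mem l i, ?_⟩
  conv_rhs => rw [← List.ofFn_get l]
  rw [List.map_ofFn, List.sum_ofFn]
  rfl

lemma exists_good_list (r : ℤ) : ∃ l : List ℕ, l.length = 198 ∧ (∀ e ∈ l, 1 ≤ e ∧ e ≤ 105) ∧
    ((l.map ramanujanTau).sum) ≡ r [ZMOD 370944] := by
  set m : ℕ := (r % 370944).toNat with hmdef
  have hmr : (m : ℤ) = r % 370944 := Int.toNat_of_nonneg (Int.emod_nonneg r (by norm_num))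
  have hmlt : m < 370944 := by
    have h1 := Int.emod_lt_of_pos r (show (0:ℤ) < 370944 by norm_num)
    omega
  set q1 := m / 84480 with hq1
  set m1 := m % 84480 with hm1
  set q2 := m1 / 4830 with hq2
  set m2 := m1 % 4830 with hm2
  set q3 := m2 / 252 with hq3
  set m3 := m2 % 252 with hm3
  set d := 251 - m3 with hd
  set a2 := d / 24 + 1 with ha2
  set b1 := 23 - d % 24 with hb1
  set kk := q1 + q2 + (q3 + 1) + a2 + b1 with hkk
  have hk75 : kk ≤ 75 := by omega
  set P := 198 - kk with hP
  set y := P % 6 with hy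
  set x := (P - 7 * y) / 6 with hx
  have hxy : 6 * x + 7 * y = P := by omega
  refine ⟨List.replicate q1 8 ++ (List.replicate q2 5 ++ (List.replicate (q3+1) 3 ++
    (List.replicate a2 2 ++ (List.replicate b1 1 ++ padL x y)))), ?_, ?_, ?_⟩
  · simp only [List.length_append, List.length_replicate, padL_length]
    omega
  · intro e he
    simp only [List.mem_append, List.mem_replicate] at he
    rcases he with h | h | h | h | h | h
    · omega
    · omega
    · omega
    · omega
    · omega
    · exact padL_mem h
  · simp only [List.map_append, List.sum_append, List.map_replicate, List.sum_replicate,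
      padL_sum, add_zero, nsmul_eq_mul, tau_8, tau_5, tau_3, tau_2, tau_1]
    show _ % (370944:ℤ) = r % 370944
    omega

theorem residue_as_198_tau_values (r : ℤ) :
    ∃ a : Fin 198 → ℕ, (∀ i, 1 ≤ a i ∧ a i ≤ 105) ∧
      (∑ i, ramanujanTau (a i)) ≡ r [ZMOD 370944] := by
  obtain ⟨l, hlen, hmem, hsum⟩ := exists_good_list r
  obtain ⟨a, hamem, hasum⟩ := list_to_fn ramanujanTau l 198 hlen
  exact ⟨a, fun i => hmem (a i) (hamem i), by rwa [hasum]⟩
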